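/- arXiv:2409.03506 — 2 statements merged into one kernel-verified Lean document; each statement's English description precedes it below -/
import Mathlib

section
/- Lipschitz estimate: for any two continuous functions x₁, x₂ : [0,T] → ℝ with x₁(0)=x₂(0)=0, one has sup over ξ ∈ [0,ℓ] and t ∈ [0,T] of |P_{x₁}(ξ,t) − P_{x₂}(ξ,t)| ≤ (‖P₀'‖_∞ + (2/(a₀ℓ))‖ω_B'‖_∞) · sup_{t∈[0,T]} |x₁(t) − x₂(t)|. -/
open Real Set

lemma periodic_deriv' {f : ℝ → ℝ} (c : ℝ) (hf : Function.Periodic f c) :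
    Function.Periodic (deriv f) c := by
  intro x
  have : (fun y => f (y + c)) = f := funext fun y => hf y
  calc deriv f (x + c) = deriv (fun y => f (y + c)) x := (deriv_comp_add_const f c x).symm
    _ = deriv f x := by rw [this]

lemma lip_of_periodic {f : ℝ → ℝ} {ℓ : ℝ} (hℓ : 0 < ℓ)
    (hf : ContDiff ℝ 1 f) (hper : Function.Periodic f ℓ) (u v : ℝ) :
    |f u - f v| ≤ (⨆ ζ : Icc (0 : ℝ) ℓ, |deriv f ζ.1|) * |u - v| := by
  set M := ⨆ ζ : Icc (0 : ℝ) ℓ, |deriv f ζ.1| with hM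
  have hbdd : BddAbove (range fun ζ : Icc (0 : ℝ) ℓ => |deriv f ζ.1|) := by
    have hc : Continuous (deriv f) := (hf.iterate_deriv' 0 1).continuous
    have : Continuous fun ζ : Icc (0 : ℝ) ℓ => |deriv f ζ.1| :=
      (hc.comp continuous_subtype_val).abs
    simpa [Set.image_univ] using (isCompact_univ.image this).bddAbove
  have hder : ∀ y : ℝ, ‖deriv f y‖ ≤ M := by
    intro y
    obtain ⟨z, hz, hzy⟩ := (periodic_deriv' ℓ hper).exists_mem_Ico₀ hℓ y
    have : |deriv f z| ≤ M := le_ciSup hbdd ⟨z, hz.1, hz.2.le⟩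
    simpa [Real.norm_eq_abs, hzy] using this
  have := Convex.norm_image_sub_le_of_norm_deriv_le
    (fun y _ => (hf.differentiable one_ne_zero) y) (fun y _ => hder y)
    convex_univ (mem_univ v) (mem_univ u)
  simpa [Real.norm_eq_abs] using this

noncomputable def Pint (ℓ a₀ : ℝ) (ωB P₀ : ℝ → ℝ) (x : ℝ → ℝ) (ξ t : ℝ) : ℝ :=
  Real.exp (-a₀ * t) * P₀ (ξ - x t)
    + (Real.exp (-a₀ * t) / ℓ) * ∫ s in (0 : ℝ)..t, Real.exp (a₀ * s) * ωB (ξ + x s - x t)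

/-- **Lipschitz estimate**: for two continuous inputs `x₁, x₂` on `[0,T]`
vanishing at `0`,
`sup_{ξ∈[0,ℓ], t∈[0,T]} |P_{x₁}(ξ,t) − P_{x₂}(ξ,t)|
  ≤ (‖P₀'‖_∞ + (2/(a₀ℓ))‖ω_B'‖_∞) · sup_{t∈[0,T]} |x₁(t) − x₂(t)|`. -/
theorem Pint_lipschitz_in_x
    (ℓ a₀ T : ℝ) (hℓ : 0 < ℓ) (ha₀ : 0 < a₀) (hT : 0 ≤ T)
    (ωB P₀ : ℝ → ℝ)
    (hωB : ContDiff ℝ 1 ωB) (hωBper : Function.Periodic ωB ℓ)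
    (hP₀ : ContDiff ℝ 1 P₀) (hP₀per : Function.Periodic P₀ ℓ)
    (x₁ x₂ : ℝ → ℝ)
    (hx₁ : ContinuousOn x₁ (Icc 0 T)) (hx₁0 : x₁ 0 = 0)
    (hx₂ : ContinuousOn x₂ (Icc 0 T)) (hx₂0 : x₂ 0 = 0) :
    ∀ ξ ∈ Icc (0 : ℝ) ℓ, ∀ t ∈ Icc (0 : ℝ) T,
      |Pint ℓ a₀ ωB P₀ x₁ ξ t - Pint ℓ a₀ ωB P₀ x₂ ξ t|
        ≤ ((⨆ ζ : Icc (0 : ℝ) ℓ, |deriv P₀ ζ.1|)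
            + (2 / (a₀ * ℓ)) * ⨆ ζ : Icc (0 : ℝ) ℓ, |deriv ωB ζ.1|)
          * ⨆ s : Icc (0 : ℝ) T, |x₁ s.1 - x₂ s.1| := by
  intro ξ hξ t ht
  set M₁ := ⨆ ζ : Icc (0 : ℝ) ℓ, |deriv P₀ ζ.1| with hM₁
  set M₂ := ⨆ ζ : Icc (0 : ℝ) ℓ, |deriv ωB ζ.1| with hM₂
  set D := ⨆ s : Icc (0 : ℝ) T, |x₁ s.1 - x₂ s.1| with hD
  have hM₁0 : 0 ≤ M₁ := Real.iSup_nonneg fun ζ => abs_nonneg _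
  have hM₂0 : 0 ≤ M₂ := Real.iSup_nonneg fun ζ => abs_nonneg _
  have hD0 : 0 ≤ D := Real.iSup_nonneg fun s => abs_nonneg _
  -- bound on |x₁ s - x₂ s|
  have hDbdd : BddAbove (range fun s : Icc (0 : ℝ) T => |x₁ s.1 - x₂ s.1|) := by
    have : Continuous fun s : Icc (0 : ℝ) T => |x₁ s.1 - x₂ s.1| :=
      (hx₁.restrict.sub hx₂.restrict).abs
    simpa [Set.image_univ] using (isCompact_univ.image this).bddAbove
  have hDs : ∀ s ∈ Icc (0 : ℝ) T, |x₁ s - x₂ s| ≤ D := fun s hs => le_ciSup hDbdd ⟨s, hs⟩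
  have hsub : Icc (0 : ℝ) t ⊆ Icc (0 : ℝ) T := Icc_subset_Icc le_rfl ht.2
  have huIcc : uIcc (0 : ℝ) t = Icc (0 : ℝ) t := uIcc_of_le ht.1
  -- continuity / integrability of the integrands
  have hcont : ∀ x : ℝ → ℝ, ContinuousOn x (Icc 0 T) →
      ContinuousOn (fun s => Real.exp (a₀ * s) * ωB (ξ + x s - x t)) (Icc 0 t) := by
    intro x hx
    exact ((Real.continuous_exp.comp (continuous_const.mul continuous_id)).continuousOn).mul
      (hωB.continuous.comp_continuousOn
        ((continuousOn_const.add (hx.mono hsub)).sub continuousOn_const))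
  have hint1 : IntervalIntegrable (fun s => Real.exp (a₀ * s) * ωB (ξ + x₁ s - x₁ t))
      MeasureTheory.volume 0 t := ((hcont x₁ hx₁).mono huIcc.subset).intervalIntegrable
  have hint2 : IntervalIntegrable (fun s => Real.exp (a₀ * s) * ωB (ξ + x₂ s - x₂ t))
      MeasureTheory.volume 0 t := ((hcont x₂ hx₂).mono huIcc.subset).intervalIntegrable
  -- pointwise bound
  have hpt : ∀ s ∈ Icc (0 : ℝ) t,
      |Real.exp (a₀ * s) * ωB (ξ + x₁ s - x₁ t) - Real.exp (a₀ * s) * ωB (ξ + x₂ s - x₂ t)|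
        ≤ Real.exp (a₀ * s) * (2 * M₂ * D) := by
    intro s hs
    have h1 : |ωB (ξ + x₁ s - x₁ t) - ωB (ξ + x₂ s - x₂ t)|
        ≤ M₂ * |(ξ + x₁ s - x₁ t) - (ξ + x₂ s - x₂ t)| := lip_of_periodic hℓ hωB hωBper _ _
    have h2 : |(ξ + x₁ s - x₁ t) - (ξ + x₂ s - x₂ t)| ≤ 2 * D := by
      have e : (ξ + x₁ s - x₁ t) - (ξ + x₂ s - x₂ t) = (x₁ s - x₂ s) - (x₁ t - x₂ t) := by ring
      rw [e]
      calc |(x₁ s - x₂ s) - (x₁ t - x₂ t)| ≤ |x₁ s - x₂ s| + |x₁ t - x₂ t| := abs_sub _ _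
        _ ≤ D + D := add_le_add (hDs s (hsub hs)) (hDs t ht)
        _ = 2 * D := by ring
    rw [← mul_sub, abs_mul, abs_of_pos (Real.exp_pos _)]
    refine mul_le_mul_of_nonneg_left ?_ (Real.exp_pos _).le
    calc |ωB (ξ + x₁ s - x₁ t) - ωB (ξ + x₂ s - x₂ t)|
        ≤ M₂ * |(ξ + x₁ s - x₁ t) - (ξ + x₂ s - x₂ t)| := h1
      _ ≤ M₂ * (2 * D) := mul_le_mul_of_nonneg_left h2 hM₂0
      _ = 2 * M₂ * D := by ring
  -- value of the exponential integral
  have hIexp : (∫ s in (0:ℝ)..t, Real.exp (a₀ * s)) = (Real.exp (a₀ * t) - 1) / a₀ := by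
    have hder : ∀ s ∈ uIcc (0:ℝ) t,
        HasDerivAt (fun y => Real.exp (a₀ * y) / a₀) (Real.exp (a₀ * s)) s := by
      intro s _
      have : HasDerivAt (fun y => Real.exp (a₀ * y)) (Real.exp (a₀ * s) * a₀) s :=
        (Real.hasDerivAt_exp (a₀ * s)).comp s ((hasDerivAt_id s).const_mul a₀) |>.congr_deriv
          (by ring)
      simpa [mul_div_cancel_right₀ _ ha₀.ne'] using this.div_const a₀
    have := intervalIntegral.integral_eq_sub_of_hasDerivAt hder
      (((Real.continuous_exp.comp (continuous_const.mul continuous_id)).continuousOn).intervalIntegrable)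
    rw [this]
    simp [sub_div]
  -- bound on the integral difference
  have hI : |(∫ s in (0:ℝ)..t, Real.exp (a₀ * s) * ωB (ξ + x₁ s - x₁ t))
      - ∫ s in (0:ℝ)..t, Real.exp (a₀ * s) * ωB (ξ + x₂ s - x₂ t)|
      ≤ 2 * M₂ * D * ((Real.exp (a₀ * t) - 1) / a₀) := by
    rw [← intervalIntegral.integral_sub hint1 hint2]
    calc |∫ s in (0:ℝ)..t, (Real.exp (a₀ * s) * ωB (ξ + x₁ s - x₁ t)
            - Real.exp (a₀ * s) * ωB (ξ + x₂ s - x₂ t))|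
        ≤ ∫ s in (0:ℝ)..t, |Real.exp (a₀ * s) * ωB (ξ + x₁ s - x₁ t)
            - Real.exp (a₀ * s) * ωB (ξ + x₂ s - x₂ t)| :=
          intervalIntegral.abs_integral_le_integral_abs ht.1
      _ ≤ ∫ s in (0:ℝ)..t, Real.exp (a₀ * s) * (2 * M₂ * D) := by
          apply intervalIntegral.integral_mono_on ht.1 (hint1.sub hint2).abs
            ((((Real.continuous_exp.comp (continuous_const.mul continuous_id)).mul
              continuous_const).continuousOn).intervalIntegrable)
          exact hpt
      _ = 2 * M₂ * D * ((Real.exp (a₀ * t) - 1) / a₀) := by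
          rw [intervalIntegral.integral_mul_const, hIexp]; ring
  -- bound on the P₀ difference
  have hP : |P₀ (ξ - x₁ t) - P₀ (ξ - x₂ t)| ≤ M₁ * D := by
    calc |P₀ (ξ - x₁ t) - P₀ (ξ - x₂ t)| ≤ M₁ * |(ξ - x₁ t) - (ξ - x₂ t)| :=
          lip_of_periodic hℓ hP₀ hP₀per _ _
      _ = M₁ * |x₁ t - x₂ t| := by rw [show (ξ - x₁ t) - (ξ - x₂ t) = -(x₁ t - x₂ t) by ring,
          abs_neg]
      _ ≤ M₁ * D := mul_le_mul_of_nonneg_left (hDs t ht) hM₁0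
  have hE1 : Real.exp (-a₀ * t) ≤ 1 := Real.exp_le_one_iff.mpr (by nlinarith [ht.1])
  have hE0 : (0:ℝ) < Real.exp (-a₀ * t) := Real.exp_pos _
  have hkey : Real.exp (-a₀ * t) * (Real.exp (a₀ * t) - 1) = 1 - Real.exp (-a₀ * t) := by
    rw [mul_sub, ← Real.exp_add]; ring_nf; simp
  calc |Pint ℓ a₀ ωB P₀ x₁ ξ t - Pint ℓ a₀ ωB P₀ x₂ ξ t|
      = |Real.exp (-a₀ * t) * (P₀ (ξ - x₁ t) - P₀ (ξ - x₂ t))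
          + (Real.exp (-a₀ * t) / ℓ) * ((∫ s in (0:ℝ)..t, Real.exp (a₀ * s) * ωB (ξ + x₁ s - x₁ t))
            - ∫ s in (0:ℝ)..t, Real.exp (a₀ * s) * ωB (ξ + x₂ s - x₂ t))| := by
        unfold Pint; congr 1; ring
    _ ≤ Real.exp (-a₀ * t) * |P₀ (ξ - x₁ t) - P₀ (ξ - x₂ t)|
          + (Real.exp (-a₀ * t) / ℓ) * |(∫ s in (0:ℝ)..t, Real.exp (a₀ * s) * ωB (ξ + x₁ s - x₁ t))
            - ∫ s in (0:ℝ)..t, Real.exp (a₀ * s) * ωB (ξ + x₂ s - x₂ t)| := by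
        refine (abs_add_le _ _).trans ?_
        rw [abs_mul, abs_mul, abs_of_pos hE0, abs_of_pos (div_pos hE0 hℓ)]
    _ ≤ Real.exp (-a₀ * t) * (M₁ * D)
          + (Real.exp (-a₀ * t) / ℓ) * (2 * M₂ * D * ((Real.exp (a₀ * t) - 1) / a₀)) :=
        add_le_add (mul_le_mul_of_nonneg_left hP hE0.le)
          (mul_le_mul_of_nonneg_left hI (div_pos hE0 hℓ).le)
    _ ≤ M₁ * D + (2 / (a₀ * ℓ)) * M₂ * D := by
        have t1 : Real.exp (-a₀ * t) * (M₁ * D) ≤ M₁ * D := by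
          nlinarith [mul_nonneg hM₁0 hD0]
        have t2 : (Real.exp (-a₀ * t) / ℓ) * (2 * M₂ * D * ((Real.exp (a₀ * t) - 1) / a₀))
            ≤ (2 / (a₀ * ℓ)) * M₂ * D := by
          have e : (Real.exp (-a₀ * t) / ℓ) * (2 * M₂ * D * ((Real.exp (a₀ * t) - 1) / a₀))
              = (2 / (a₀ * ℓ)) * M₂ * D * (Real.exp (-a₀ * t) * (Real.exp (a₀ * t) - 1)) := by
            field_simp
          rw [e, hkey]
          have h0 : 0 ≤ (2 / (a₀ * ℓ)) * M₂ * D := by positivity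
          nlinarith
        linarith
    _ = (M₁ + (2 / (a₀ * ℓ)) * M₂) * D := by ring
end

section
/- Linear stability criterion: with F and e as defined, and τ = −(1/4)(2a₀ + ζℓ/π + 2λa₁/(a₀ℓ)), every eigenvalue of the Jacobian DF(e) has strictly negative real part if and only if τ < 0; and if τ > 0 then DF(e) has an eigenvalue with strictly positive real part. -/
open Real Set Polynomial

/-- The first-order vector field of the two-row model in the variables
`(p₁ᶜ, p₁ˢ, q₁ᶜ, q₁ˢ, x)`, with `ζ = 2πk/(ηℓ)` and `λ = 2π²U/(ηℓ)`. -/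
noncomputable def motorField (l zeta lam a0 a1 b1 : ℝ) (p : Fin 5 → ℝ) : Fin 5 → ℝ :=
  ![-a0 * p 0 + (zeta * p 4 + (lam / 2) * (p 1 - p 3)) * p 1 + a1 / l,
    -a0 * p 1 - (zeta * p 4 + (lam / 2) * (p 1 - p 3)) * p 0 + b1 / l,
    -a0 * p 2 - (zeta * p 4 + (lam / 2) * (p 1 - p 3)) * p 3 + a1 / l,
    -a0 * p 3 + (zeta * p 4 + (lam / 2) * (p 1 - p 3)) * p 2 + b1 / l,
    -(l / (2 * π)) * (zeta * p 4 + (lam / 2) * (p 1 - p 3))]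

/-- The equilibrium point `e = (a₁/(a₀ℓ), b₁/(a₀ℓ), a₁/(a₀ℓ), b₁/(a₀ℓ), 0)`. -/
noncomputable def motorEq (l a0 a1 b1 : ℝ) : Fin 5 → ℝ :=
  ![a1 / (a0 * l), b1 / (a0 * l), a1 / (a0 * l), b1 / (a0 * l), 0]

/-- The Jacobian matrix of the vector field at the equilibrium point. -/
noncomputable def motorJac (l zeta lam a0 a1 b1 : ℝ) : Matrix (Fin 5) (Fin 5) ℝ :=
  Matrix.of fun i j =>
    fderiv ℝ (motorField l zeta lam a0 a1 b1) (motorEq l a0 a1 b1) (Pi.single j 1) i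

/-- The explicit value of the Jacobian matrix. -/
noncomputable def Jmat (l zeta lam a0 a1 b1 : ℝ) : Matrix (Fin 5) (Fin 5) ℝ :=
  ![![-a0, lam/2 * (b1/(a0*l)), 0, -(lam/2 * (b1/(a0*l))), zeta * (b1/(a0*l))],
    ![0, -a0 - lam/2 * (a1/(a0*l)), 0, lam/2 * (a1/(a0*l)), -(zeta * (a1/(a0*l)))],
    ![0, -(lam/2 * (b1/(a0*l))), -a0, lam/2 * (b1/(a0*l)), -(zeta * (b1/(a0*l)))],
    ![0, lam/2 * (a1/(a0*l)), 0, -a0 - lam/2 * (a1/(a0*l)), zeta * (a1/(a0*l))],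
    ![0, -(l/(2*π) * (lam/2)), 0, l/(2*π) * (lam/2), -(l/(2*π) * zeta)]]

set_option maxHeartbeats 1000000 in
lemma motorJac_eq (l zeta lam a0 a1 b1 : ℝ) :
    motorJac l zeta lam a0 a1 b1 = Jmat l zeta lam a0 a1 b1 := by
  classical
  set e := motorEq l a0 a1 b1 with he
  have hp : ∀ k : Fin 5, HasFDerivAt (fun p : Fin 5 → ℝ => p k)
      (ContinuousLinearMap.proj k : (Fin 5 → ℝ) →L[ℝ] ℝ) e := fun k => hasFDerivAt_apply k e
  have hs := ((hp 4).const_mul zeta).add (((hp 1).sub (hp 3)).const_mul (lam / 2))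
  set D : Fin 5 → ((Fin 5 → ℝ) →L[ℝ] ℝ) := fun i =>
    ∑ j : Fin 5, Jmat l zeta lam a0 a1 b1 i j • (ContinuousLinearMap.proj j : (Fin 5 → ℝ) →L[ℝ] ℝ)
    with hD
  have he4 : e 4 = 0 := by simp [he, motorEq]
  have he1 : e 1 = b1/(a0*l) := by simp [he, motorEq]
  have he3 : e 3 = b1/(a0*l) := by simp [he, motorEq]
  have he0 : e 0 = a1/(a0*l) := by simp [he, motorEq]
  have he2 : e 2 = a1/(a0*l) := by simp [he, motorEq]
  have hcomps : ∀ i, HasFDerivAt (fun p => motorField l zeta lam a0 a1 b1 p i) (D i) e := by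
    intro i
    fin_cases i
    · refine HasFDerivAt.congr_fderiv ((((hp 0).const_mul (-a0)).add (hs.mul (hp 1))).add_const (a1 / l)) ?_
      refine ContinuousLinearMap.ext fun v => ?_
      simp [hD, Jmat, Fin.sum_univ_five, he0, he1, he2, he3, he4, Matrix.vecHead, Matrix.vecTail]
      ring
    · refine HasFDerivAt.congr_fderiv ((((hp 1).const_mul (-a0)).sub (hs.mul (hp 0))).add_const (b1 / l)) ?_
      refine ContinuousLinearMap.ext fun v => ?_
      simp [hD, Jmat, Fin.sum_univ_five, he0, he1, he2, he3, he4, Matrix.vecHead, Matrix.vecTail]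
      ring
    · refine HasFDerivAt.congr_fderiv ((((hp 2).const_mul (-a0)).sub (hs.mul (hp 3))).add_const (a1 / l)) ?_
      refine ContinuousLinearMap.ext fun v => ?_
      simp [hD, Jmat, Fin.sum_univ_five, he0, he1, he2, he3, he4, Matrix.vecHead, Matrix.vecTail]
      ring
    · refine HasFDerivAt.congr_fderiv ((((hp 3).const_mul (-a0)).add (hs.mul (hp 2))).add_const (b1 / l)) ?_
      refine ContinuousLinearMap.ext fun v => ?_
      simp [hD, Jmat, Fin.sum_univ_five, he0, he1, he2, he3, he4, Matrix.vecHead, Matrix.vecTail]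
      ring
    · refine HasFDerivAt.congr_fderiv (hs.const_mul (-(l / (2 * π)))) ?_
      refine ContinuousLinearMap.ext fun v => ?_
      simp [hD, Jmat, Fin.sum_univ_five, he0, he1, he2, he3, he4, Matrix.vecHead, Matrix.vecTail]
      ring
  have hF : HasFDerivAt (motorField l zeta lam a0 a1 b1) (ContinuousLinearMap.pi D) e :=
    hasFDerivAt_pi.2 hcomps
  ext i j
  rw [motorJac, Matrix.of_apply, ← he, hF.fderiv]
  rw [ContinuousLinearMap.pi_apply]
  simp only [hD, ContinuousLinearMap.sum_apply, ContinuousLinearMap.smul_apply,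
    ContinuousLinearMap.proj_apply, Pi.single_apply, smul_eq_mul, mul_ite, mul_one, mul_zero,
    Finset.sum_ite_eq', Finset.mem_univ, if_true]

private lemma det5_of (a0 c A B zeta m : ℂ) (z : ℂ) :
    Matrix.det (Matrix.of
      ![![z + a0, -(c*B), 0, c*B, -(zeta*B)],
        ![0, z + a0 + c*A, 0, -(c*A), zeta*A],
        ![0, c*B, z + a0, -(c*B), zeta*B],
        ![0, -(c*A), 0, z + a0 + c*A, -(zeta*A)],
        ![0, m*c, 0, -(m*c), z + m*zeta]])
      = (z + a0)^3 * (z^2 + (a0 + 2*c*A + zeta*m)*z + a0*zeta*m) := by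
  simp [Matrix.det_succ_row_zero, Fin.sum_univ_succ, Matrix.det_fin_three,
    show Fin.castSucc 2 = (2 : Fin 4) from rfl, show Fin.succAbove 2 2 = (3 : Fin 4) from rfl,
    show Fin.succAbove (3 : Fin 4) (2 : Fin 3) = (2 : Fin 4) from rfl]
  ring

private lemma det5 (a0 c A B zeta m : ℂ) (z : ℂ) :
    Matrix.det
      ![![z + a0, -(c*B), 0, c*B, -(zeta*B)],
        ![0, z + a0 + c*A, 0, -(c*A), zeta*A],
        ![0, c*B, z + a0, -(c*B), zeta*B],
        ![0, -(c*A), 0, z + a0 + c*A, -(zeta*A)],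
        ![0, m*c, 0, -(m*c), z + m*zeta]]
      = (z + a0)^3 * (z^2 + (a0 + 2*c*A + zeta*m)*z + a0*zeta*m) := by
  exact det5_of a0 c A B zeta m z

set_option maxHeartbeats 1000000 in
/-- **Linear stability criterion**: all complex eigenvalues of the Jacobian at the
equilibrium (the roots of its characteristic polynomial over `ℂ`) have strictly
negative real part if and only if `τ < 0`; and if `τ > 0` there is an eigenvalue
with strictly positive real part. -/
theorem motorField_linear_stability
    (l zeta lam a0 a1 b1 : ℝ)
    (hl : 0 < l) (hzeta : 0 < zeta) (hlam : 0 < lam) (ha0 : 0 < a0)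
    (τ : ℝ) (hτ : τ = -(1 / 4) * (2 * a0 + zeta * l / π + 2 * lam * a1 / (a0 * l))) :
    ((∀ z : ℂ,
        ((motorJac l zeta lam a0 a1 b1).charpoly.map (algebraMap ℝ ℂ)).IsRoot z →
        z.re < 0) ↔ τ < 0) ∧
    (0 < τ → ∃ z : ℂ,
      ((motorJac l zeta lam a0 a1 b1).charpoly.map (algebraMap ℝ ℂ)).IsRoot z ∧
      0 < z.re) := by
  have hπ : (0:ℝ) < π := Real.pi_pos
  obtain ⟨A, hA⟩ : ∃ x : ℝ, x = a1 / (a0 * l) := ⟨_, rfl⟩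
  obtain ⟨t1, ht1⟩ : ∃ x : ℝ, x = a0 + lam * A + zeta * (l / (2 * π)) := ⟨_, rfl⟩
  obtain ⟨t0, ht0def⟩ : ∃ x : ℝ, x = a0 * zeta * (l / (2 * π)) := ⟨_, rfl⟩
  have ht0 : 0 < t0 := by rw [ht0def]; positivity
  have hτt : τ = -(t1/2) := by
    rw [hτ, ht1, hA]
    field_simp
    ring
  obtain ⟨B, hB⟩ : ∃ x : ℝ, x = b1 / (a0 * l) := ⟨_, rfl⟩
  -- root characterization
  have hroot : ∀ z : ℂ,
      ((motorJac l zeta lam a0 a1 b1).charpoly.map (algebraMap ℝ ℂ)).IsRoot z ↔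
      (z + (a0:ℂ))^3 * (z^2 + (t1:ℂ)*z + (t0:ℂ)) = 0 := by
    intro z
    rw [motorJac_eq, Polynomial.IsRoot.def]
    rw [← Matrix.charpoly_map (Jmat l zeta lam a0 a1 b1) (algebraMap ℝ ℂ)]
    set Mc := (Jmat l zeta lam a0 a1 b1).map (algebraMap ℝ ℂ) with hMc
    have h2 := RingHom.map_det (Polynomial.evalRingHom z) (Matrix.charmatrix Mc)
    simp only [Polynomial.coe_evalRingHom] at h2
    have h3 : (Matrix.charmatrix Mc).map (Polynomial.evalRingHom z) =
      ![![z + (a0:ℂ), -(((lam/2 : ℝ):ℂ)*((B:ℝ):ℂ)), 0, ((lam/2 : ℝ):ℂ)*((B:ℝ):ℂ), -(((zeta:ℝ):ℂ)*((B:ℝ):ℂ))],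
        ![0, z + (a0:ℂ) + ((lam/2 : ℝ):ℂ)*((A:ℝ):ℂ), 0, -(((lam/2 : ℝ):ℂ)*((A:ℝ):ℂ)), ((zeta:ℝ):ℂ)*((A:ℝ):ℂ)],
        ![0, ((lam/2 : ℝ):ℂ)*((B:ℝ):ℂ), z + (a0:ℂ), -(((lam/2 : ℝ):ℂ)*((B:ℝ):ℂ)), ((zeta:ℝ):ℂ)*((B:ℝ):ℂ)],
        ![0, -(((lam/2 : ℝ):ℂ)*((A:ℝ):ℂ)), 0, z + (a0:ℂ) + ((lam/2 : ℝ):ℂ)*((A:ℝ):ℂ), -(((zeta:ℝ):ℂ)*((A:ℝ):ℂ))],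
        ![0, ((l/(2*π) : ℝ):ℂ)*((lam/2 : ℝ):ℂ), 0, -(((l/(2*π) : ℝ):ℂ)*((lam/2 : ℝ):ℂ)), z + ((l/(2*π) : ℝ):ℂ)*((zeta:ℝ):ℂ)]] := by
      ext i j
      fin_cases i <;> fin_cases j <;>
        simp [hMc, Jmat, hA, hB, Matrix.charmatrix_apply_eq, Matrix.charmatrix_apply_ne,
          Matrix.map_apply, Matrix.map, Matrix.vecHead, Matrix.vecTail] <;> push_cast <;> ring
    rw [RingHom.mapMatrix_apply] at h2
    simp only [Polynomial.coe_evalRingHom] at h2 h3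
    have h4 : Matrix.charpoly Mc = (Matrix.charmatrix Mc).det := rfl
    rw [h4, h2, h3, det5]
    have hcong : ((a0:ℂ) + 2*((lam/2:ℝ):ℂ)*((A:ℝ):ℂ) + ((zeta:ℝ):ℂ)*((l/(2*π):ℝ):ℂ)) = ((t1:ℝ):ℂ) := by
      rw [ht1]; push_cast; ring
    have hcong2 : ((a0:ℂ) * ((zeta:ℝ):ℂ) * ((l/(2*π):ℝ):ℂ)) = ((t0:ℝ):ℂ) := by
      rw [ht0def]; push_cast; ring
    rw [hcong, hcong2]
  -- the two roots of the quadratic factor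
  obtain ⟨s, hs2⟩ := IsAlgClosed.exists_pow_nat_eq ((t1:ℂ)^2 - 4*(t0:ℂ)) (n := 2) (by norm_num)
  obtain ⟨r1, hr1⟩ : ∃ x : ℂ, x = (-(t1:ℂ) + s)/2 := ⟨_, rfl⟩
  obtain ⟨r2, hr2⟩ : ∃ x : ℂ, x = (-(t1:ℂ) - s)/2 := ⟨_, rfl⟩
  have hfac : ∀ w : ℂ, w^2 + (t1:ℂ)*w + (t0:ℂ) = (w - r1)*(w - r2) := by
    intro w
    simp only [hr1, hr2]
    linear_combination hs2/4
  have hsum : r1 + r2 = -(t1:ℂ) := by simp only [hr1, hr2]; ring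
  have hresum : r1.re + r2.re = -t1 := by
    have := congrArg Complex.re hsum
    simpa using this
  have hr1root : ((motorJac l zeta lam a0 a1 b1).charpoly.map (algebraMap ℝ ℂ)).IsRoot r1 := by
    rw [hroot, hfac]; simp
  have hr2root : ((motorJac l zeta lam a0 a1 b1).charpoly.map (algebraMap ℝ ℂ)).IsRoot r2 := by
    rw [hroot, hfac]; simp
  constructor
  · constructor
    · intro hall
      have h1 := hall r1 hr1root
      have h2 := hall r2 hr2root
      rw [hτt]
      have : 0 < t1 := by linarith
      linarith
    · intro hτ0 z hz
      have ht1 : 0 < t1 := by rw [hτt] at hτ0; linarith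
      rw [hroot] at hz
      rcases mul_eq_zero.mp hz with h | h
      · have hz' : z = -(a0:ℂ) := by
          have := pow_eq_zero_iff (n := 3) (by norm_num) |>.mp h
          linear_combination this
        rw [hz']
        simpa using neg_neg_iff_pos.mpr ha0
      · -- z is a root of the quadratic
        have hre := congrArg Complex.re h
        have him := congrArg Complex.im h
        rw [pow_two] at hre him
        simp only [Complex.add_re, Complex.add_im, Complex.mul_re, Complex.mul_im,
          Complex.ofReal_re, Complex.ofReal_im, Complex.zero_re, Complex.zero_im,
          mul_zero, zero_mul, sub_zero, add_zero, zero_add] at hre him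
        -- hre : z.re*z.re - z.im*z.im + t1*z.re + t0 = 0
        -- him : z.re*z.im + z.im*z.re + t1*z.im = 0
        rcases mul_eq_zero.mp (show z.im * (2*z.re + t1) = 0 by linarith [him]) with h0 | h0
        · -- z.im = 0 : real root
          nlinarith [hre, sq_nonneg z.im, sq_nonneg z.re, mul_self_nonneg (z.re + t1)]
        · -- 2 z.re + t1 = 0
          linarith
  · intro hτpos
    have ht1 : t1 < 0 := by rw [hτt] at hτpos; linarith
    rcases le_or_gt r1.re 0 with h | h
    · exact ⟨r2, hr2root, by linarith⟩
    · exact ⟨r1, hr1root, h⟩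
end
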